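/- For |q| < 1, one has η(q)^2 / η(q^2) = θ₄(q), i.e. q^{1/12} ∏_{n≥1}(1-q^n)^2 / (q^{1/12} ∏_{n≥1}(1-q^{2n})) = ∑_{n∈ℤ} (-1)^n q^{n^2}. -/

import Mathlib

open Filter Topology Finset Real


/-- Dedekind eta function η(q) = q^(1/24) ∏_{n≥1} (1 - q^n), for 0 < q < 1. -/
noncomputable def eta (q : ℝ) : ℝ := q ^ ((1 : ℝ)/24) * ∏' n : ℕ, (1 - q ^ (n + 1))
/-- Jacobi theta function θ₂(q) = ∑_{n∈ℤ} q^((n+1/2)²), for 0 < q < 1 (real powers). -/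
noncomputable def theta2 (q : ℝ) : ℝ := ∑' n : ℤ, q ^ (((n : ℝ) + 1/2) ^ 2)

/-- Jacobi theta function θ₃(q) = ∑_{n∈ℤ} q^(n²). -/
noncomputable def theta3 (q : ℝ) : ℝ := ∑' n : ℤ, q ^ ((n : ℝ) ^ 2)

/-- Jacobi theta function θ₄(q) = ∑_{n∈ℤ} (-1)^n q^(n²). -/
noncomputable def theta4 (q : ℝ) : ℝ := ∑' n : ℤ, (-1 : ℝ) ^ n * q ^ ((n : ℝ) ^ 2)

namespace Stmt1Aux

variable {q : ℝ}

lemma neg_log_one_sub_le {x : ℝ} (h0 : 0 ≤ x) (h1 : x < 1) :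
    -Real.log (1 - x) ≤ x / (1 - x) := by
  have h : (0:ℝ) < 1 - x := by linarith
  have h2 := Real.log_le_sub_one_of_pos (inv_pos.mpr h)
  rw [Real.log_inv] at h2
  have : (1 - x)⁻¹ - 1 = x / (1 - x) := by field_simp; ring
  linarith

section
variable (hq0 : 0 < q) (hq1 : q < 1) (g : ℕ → ℝ)
  (hg0 : ∀ n, 0 ≤ g n) (hgle : ∀ n, g n ≤ q ^ (n + 1))

include hq0 hq1 hg0 hgle

lemma g_lt_one (n : ℕ) : g n < 1 := by
  have h1 : q ^ (n+1) ≤ q ^ 1 := pow_le_pow_of_le_one hq0.le hq1.le (by omega)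
  have := hgle n
  simpa using lt_of_le_of_lt (this.trans h1) (by simpa using hq1)

lemma summable_log : Summable fun n => Real.log (1 - g n) := by
  have hgeo : Summable fun n : ℕ => q ^ (n + 1) / (1 - q) := by
    have : Summable fun n : ℕ => q ^ n := summable_geometric_of_lt_one hq0.le hq1
    simpa [pow_succ, div_eq_mul_inv, mul_comm, mul_assoc, mul_left_comm] using
      ((this.mul_left q).mul_right (1 - q)⁻¹)
  refine Summable.of_norm_bounded hgeo fun n => ?_
  have h1 : g n < 1 := g_lt_one hq0 hq1 g hg0 hgle n
  have hle : -Real.log (1 - g n) ≤ g n / (1 - g n) := neg_log_one_sub_le (hg0 n) h1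
  have hlog_le : Real.log (1 - g n) ≤ 0 :=
    Real.log_nonpos (by linarith [hg0 n]) (by linarith [hg0 n])
  rw [Real.norm_eq_abs, abs_of_nonpos hlog_le]
  refine hle.trans ?_
  have h1q : (0:ℝ) < 1 - q := by linarith
  have h2 : 1 - q ≤ 1 - g n := by
    have h3 : q ^ (n+1) ≤ q ^ 1 := pow_le_pow_of_le_one hq0.le hq1.le (by omega)
    have := hgle n
    simp only [pow_one] at h3
    linarith
  exact div_le_div₀ (by positivity) (hgle n) h1q h2

lemma hasProd_one_sub :
    HasProd (fun n => 1 - g n) (Real.exp (∑' n, Real.log (1 - g n))) := by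
  have hpos : ∀ n, 0 < 1 - g n := fun n => by
    have := g_lt_one hq0 hq1 g hg0 hgle n; linarith
  have := (summable_log hq0 hq1 g hg0 hgle).hasSum.rexp
  exact this.congr_fun fun n => by simp [Function.comp, Real.exp_log (hpos n)]

lemma tprod_one_sub_pos : 0 < ∏' n, (1 - g n) := by
  rw [(hasProd_one_sub hq0 hq1 g hg0 hgle).tprod_eq]
  exact Real.exp_pos _

end

noncomputable def P (q : ℝ) (m : ℕ) : ℝ := ∏ j ∈ Finset.range m, (1 - q ^ (2*j+2))
noncomputable def R (q : ℝ) (m : ℤ) : ℝ := if 0 ≤ m then (P q m.toNat)⁻¹ else 0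
noncomputable def B (q : ℝ) (n : ℕ) (k : ℤ) : ℝ := P q (2*n) * R q ((n:ℤ) - k) * R q ((n:ℤ) + k)

variable {q : ℝ}

lemma fac_pos (hq0 : 0 < q) (hq1 : q < 1) (j : ℕ) : 0 < 1 - q ^ (j+1) := by
  have h1 : q ^ (j+1) ≤ q ^ 1 := pow_le_pow_of_le_one hq0.le hq1.le (by omega)
  simp only [pow_one] at h1; linarith

lemma P_pos (hq0 : 0 < q) (hq1 : q < 1) (m : ℕ) : 0 < P q m := by
  refine Finset.prod_pos fun j _ => ?_
  have := fac_pos hq0 hq1 (2*j+1)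
  have h : 2*j+1+1 = 2*j+2 := by omega
  rwa [h] at this

lemma P_ne (hq0 : 0 < q) (hq1 : q < 1) (m : ℕ) : P q m ≠ 0 := (P_pos hq0 hq1 m).ne'

lemma P_succ (m : ℕ) : P q (m+1) = P q m * (1 - q ^ (2*m+2)) := Finset.prod_range_succ _ m

lemma P_le_one (hq0 : 0 < q) (hq1 : q < 1) (m : ℕ) : P q m ≤ 1 := by
  refine Finset.prod_le_one (fun j _ => ?_) (fun j _ => ?_)
  · have := fac_pos hq0 hq1 (2*j+1)
    have h : 2*j+1+1 = 2*j+2 := by omega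
    rw [h] at this; linarith
  · have : 0 < q ^ (2*j+2) := by positivity
    linarith

lemma R_coe (m : ℕ) : R q (m : ℤ) = (P q m)⁻¹ := by simp [R]

lemma R_neg {m : ℤ} (h : m < 0) : R q m = 0 := by simp [R, not_le.mpr h]

lemma fac_ne (hq0 : 0 < q) (hq1 : q < 1) (j : ℕ) : (1 : ℝ) - q ^ (j+1) ≠ 0 :=
  (fac_pos hq0 hq1 j).ne'

lemma R_eq_of (m : ℤ) (a : ℕ) (h : m = (a:ℤ)) : R q m = (P q a)⁻¹ := by
  subst h; exact R_coe a

/-- The key Gaussian-binomial-style recursion, stated for `u + v = 2n+2`. -/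
lemma key (hq0 : 0 < q) (hq1 : q < 1) (n : ℕ) (u v : ℤ) (huv : u + v = 2*(n:ℤ)+2) :
    P q (2*n+2) * R q u * R q v
      = (1 + q^(4*n+2)) * (P q (2*n) * R q (u-1) * R q (v-1))
        + q ^ (2*u) * (P q (2*n) * R q u * R q (v-2))
        + q ^ (2*v) * (P q (2*n) * R q (u-2) * R q v) := by
  have hPne := P_ne hq0 hq1
  have hfne := fac_ne hq0 hq1
  have e0 : P q 0 = 1 := by simp [P]
  rcases lt_trichotomy u 0 with hu | hu | hu
  · rw [R_neg hu, R_neg (by omega : u - 1 < 0), R_neg (by omega : u - 2 < 0)]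
    ring
  · -- u = 0, v = 2n+2
    subst hu
    have hv : v = 2*(n:ℤ)+2 := by omega
    subst hv
    rw [R_neg (by omega : (0:ℤ) - 1 < 0), R_neg (by omega : (0:ℤ) - 2 < 0),
      R_eq_of 0 0 (by simp), R_eq_of (2*(n:ℤ)+2-2) (2*n) (by push_cast; ring),
      R_eq_of (2*(n:ℤ)+2) (2*n+2) (by push_cast; ring), e0]
    have hA := hPne (2*n+2); have hB := hPne (2*n)
    field_simp
    simp
  rcases lt_trichotomy v 0 with hv | hv | hv
  · rw [R_neg hv, R_neg (by omega : v - 1 < 0), R_neg (by omega : v - 2 < 0)]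
    ring
  · -- v = 0, u = 2n+2
    subst hv
    have hu2 : u = 2*(n:ℤ)+2 := by omega
    subst hu2
    rw [R_neg (by omega : (0:ℤ) - 1 < 0), R_neg (by omega : (0:ℤ) - 2 < 0),
      R_eq_of 0 0 (by simp), R_eq_of (2*(n:ℤ)+2-2) (2*n) (by push_cast; ring),
      R_eq_of (2*(n:ℤ)+2) (2*n+2) (by push_cast; ring), e0]
    have hA := hPne (2*n+2); have hB := hPne (2*n)
    field_simp
    simp
  rcases eq_or_lt_of_le (show (1:ℤ) ≤ u by omega) with hu1 | hu1
  · -- u = 1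
    have hu1' : u = 1 := hu1.symm
    subst hu1'
    have hv' : v = 2*(n:ℤ)+1 := by omega
    rcases eq_or_lt_of_le (show (1:ℤ) ≤ v by omega) with hv1 | hv1
    · -- v = 1, n = 0
      have hv1' : v = 1 := hv1.symm
      have hn : n = 0 := by omega
      subst hv1' hn
      rw [R_neg (by norm_num : (1:ℤ) - 2 < 0), R_eq_of (1-1) 0 (by norm_num),
        R_eq_of 1 1 (by norm_num), e0]
      have e1 : P q 1 = 1 - q^2 := by simp [P]
      have e2 : P q (2*0+2) = (1 - q^2) * (1 - q^4) := by
        norm_num [P, Finset.prod_range_succ]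
      have e3 : P q (2*0) = 1 := by norm_num [P]
      have f4 := hfne 1; have f5 := hfne 3
      norm_num at f4 f5
      have hz : q ^ ((2:ℤ)*1) = q^(2:ℕ) := by
        rw [show ((2:ℤ)*1) = ((2:ℕ):ℤ) by norm_num, zpow_natCast]
      rw [e1, e2, hz]
      field_simp
      ring
    · -- u = 1, v = 2n+1 >= 2, so n >= 1
      have hn1 : 1 ≤ n := by omega
      obtain ⟨m, rfl⟩ := Nat.exists_eq_add_of_le hn1
      subst hv'
      rw [R_neg (by norm_num : (1:ℤ) - 2 < 0),
        R_eq_of (2*((1+m:ℕ):ℤ)+1-1) (2*m+2) (by push_cast; ring),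
        R_eq_of (2*((1+m:ℕ):ℤ)+1-2) (2*m+1) (by push_cast; ring),
        R_eq_of (2*((1+m:ℕ):ℤ)+1) (2*m+3) (by push_cast; ring),
        R_eq_of (1-1) 0 (by norm_num), R_eq_of 1 1 (by norm_num), e0]
      have e1 : P q (2*(1+m)+2) = P q (2*m+1) * (1 - q^(4*m+4)) * (1 - q^(4*m+6)) * (1 - q^(4*m+8)) := by
        rw [(by omega : 2*(1+m)+2 = ((2*m+1)+1)+1+1), P_succ, P_succ, P_succ]
        rw [(by omega : 2*(2*m+1)+2 = 4*m+4), (by omega : 2*((2*m+1)+1)+2 = 4*m+6),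
          (by omega : 2*((2*m+1)+1+1)+2 = 4*m+8)]
      have e2 : P q (2*m+3) = P q (2*m+1) * (1 - q^(4*m+4)) * (1 - q^(4*m+6)) := by
        rw [(by omega : 2*m+3 = ((2*m+1)+1)+1), P_succ, P_succ]
        rw [(by omega : 2*(2*m+1)+2 = 4*m+4), (by omega : 2*((2*m+1)+1)+2 = 4*m+6)]
      have e3 : P q (2*m+2) = P q (2*m+1) * (1 - q^(4*m+4)) := by
        rw [(by omega : 2*m+2 = (2*m+1)+1), P_succ, (by omega : 2*(2*m+1)+2 = 4*m+4)]
      have e4 : P q (2*(1+m)) = P q (2*m+1) * (1 - q^(4*m+4)) := by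
        rw [(by omega : 2*(1+m) = (2*m+1)+1), P_succ, (by omega : 2*(2*m+1)+2 = 4*m+4)]
      have e5 : P q 1 = 1 - q^2 := by simp [P]
      have hz1 : q ^ ((2:ℤ)*1) = q^(2:ℕ) := by
        rw [show ((2:ℤ)*1) = ((2:ℕ):ℤ) by norm_num, zpow_natCast]
      have hz2 : q ^ (2*(2*((1+m:ℕ):ℤ)+1)) = q^(4*m+6 : ℕ) := by
        rw [show (2*(2*((1+m:ℕ):ℤ)+1)) = ((4*m+6 : ℕ) : ℤ) by push_cast; ring, zpow_natCast]
      have h46 : q^(4*(1+m)+2) = q^(4*m+6 : ℕ) := by rw [(by omega : 4*(1+m)+2 = 4*m+6)]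
      rw [e1, e2, e3, e4, e5, hz1, hz2, h46]
      have h1' := hPne (2*m+1)
      have f1 := hfne (4*m+3); have f2 := hfne (4*m+5); have f3 := hfne (4*m+7); have f4 := hfne 1
      rw [(by omega : 4*m+3+1 = 4*m+4)] at f1
      rw [(by omega : 4*m+5+1 = 4*m+6)] at f2
      rw [(by omega : 4*m+7+1 = 4*m+8)] at f3
      norm_num at f4
      field_simp
      ring
  · -- u >= 2
    rcases eq_or_lt_of_le (show (1:ℤ) ≤ v by omega) with hv1 | hv1
    · -- v = 1, u = 2n+1 >= 2
      have hv1' : v = 1 := hv1.symm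
      subst hv1'
      have hu' : u = 2*(n:ℤ)+1 := by omega
      have hn1 : 1 ≤ n := by omega
      obtain ⟨m, rfl⟩ := Nat.exists_eq_add_of_le hn1
      subst hu'
      rw [R_neg (by norm_num : (1:ℤ) - 2 < 0),
        R_eq_of (2*((1+m:ℕ):ℤ)+1-1) (2*m+2) (by push_cast; ring),
        R_eq_of (2*((1+m:ℕ):ℤ)+1-2) (2*m+1) (by push_cast; ring),
        R_eq_of (2*((1+m:ℕ):ℤ)+1) (2*m+3) (by push_cast; ring),
        R_eq_of (1-1) 0 (by norm_num), R_eq_of 1 1 (by norm_num), e0]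
      have e1 : P q (2*(1+m)+2) = P q (2*m+1) * (1 - q^(4*m+4)) * (1 - q^(4*m+6)) * (1 - q^(4*m+8)) := by
        rw [(by omega : 2*(1+m)+2 = ((2*m+1)+1)+1+1), P_succ, P_succ, P_succ]
        rw [(by omega : 2*(2*m+1)+2 = 4*m+4), (by omega : 2*((2*m+1)+1)+2 = 4*m+6),
          (by omega : 2*((2*m+1)+1+1)+2 = 4*m+8)]
      have e2 : P q (2*m+3) = P q (2*m+1) * (1 - q^(4*m+4)) * (1 - q^(4*m+6)) := by
        rw [(by omega : 2*m+3 = ((2*m+1)+1)+1), P_succ, P_succ]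
        rw [(by omega : 2*(2*m+1)+2 = 4*m+4), (by omega : 2*((2*m+1)+1)+2 = 4*m+6)]
      have e3 : P q (2*m+2) = P q (2*m+1) * (1 - q^(4*m+4)) := by
        rw [(by omega : 2*m+2 = (2*m+1)+1), P_succ, (by omega : 2*(2*m+1)+2 = 4*m+4)]
      have e4 : P q (2*(1+m)) = P q (2*m+1) * (1 - q^(4*m+4)) := by
        rw [(by omega : 2*(1+m) = (2*m+1)+1), P_succ, (by omega : 2*(2*m+1)+2 = 4*m+4)]
      have e5 : P q 1 = 1 - q^2 := by simp [P]
      have hz1 : q ^ ((2:ℤ)*1) = q^(2:ℕ) := by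
        rw [show ((2:ℤ)*1) = ((2:ℕ):ℤ) by norm_num, zpow_natCast]
      have hz2 : q ^ (2*(2*((1+m:ℕ):ℤ)+1)) = q^(4*m+6 : ℕ) := by
        rw [show (2*(2*((1+m:ℕ):ℤ)+1)) = ((4*m+6 : ℕ) : ℤ) by push_cast; ring, zpow_natCast]
      have h46 : q^(4*(1+m)+2) = q^(4*m+6 : ℕ) := by rw [(by omega : 4*(1+m)+2 = 4*m+6)]
      rw [e1, e2, e3, e4, e5, hz1, hz2, h46]
      have h1' := hPne (2*m+1)
      have f1 := hfne (4*m+3); have f2 := hfne (4*m+5); have f3 := hfne (4*m+7); have f4 := hfne 1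
      rw [(by omega : 4*m+3+1 = 4*m+4)] at f1
      rw [(by omega : 4*m+5+1 = 4*m+6)] at f2
      rw [(by omega : 4*m+7+1 = 4*m+8)] at f3
      norm_num at f4
      field_simp
      ring
    · -- u >= 2, v >= 2 : generic case
      obtain ⟨a, ha⟩ : ∃ a : ℕ, u = (a:ℤ) + 2 := ⟨(u-2).toNat, by omega⟩
      obtain ⟨b, hb⟩ : ∃ b : ℕ, v = (b:ℤ) + 2 := ⟨(v-2).toNat, by omega⟩
      subst ha hb
      rw [R_eq_of ((a:ℤ)+2-1) (a+1) (by push_cast; ring),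
        R_eq_of ((a:ℤ)+2-2) a (by push_cast; ring),
        R_eq_of ((a:ℤ)+2) (a+2) (by push_cast; ring),
        R_eq_of ((b:ℤ)+2-1) (b+1) (by push_cast; ring),
        R_eq_of ((b:ℤ)+2-2) b (by push_cast; ring),
        R_eq_of ((b:ℤ)+2) (b+2) (by push_cast; ring)]
      have e1 : P q (2*n+2) = P q (2*n) * (1 - q^(2*a+2*b+6)) * (1 - q^(2*a+2*b+8)) := by
        rw [(by omega : 2*n+2 = ((2*n)+1)+1), P_succ, P_succ]
        rw [(by omega : 2*(2*n)+2 = 2*a+2*b+6), (by omega : 2*((2*n)+1)+2 = 2*a+2*b+8)]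
      have ea2 : P q (a+2) = P q a * (1 - q^(2*a+2)) * (1 - q^(2*a+4)) := by
        rw [(by omega : a+2 = (a+1)+1), P_succ, P_succ, (by omega : 2*(a+1)+2 = 2*a+4)]
      have ea1 : P q (a+1) = P q a * (1 - q^(2*a+2)) := P_succ a
      have eb2 : P q (b+2) = P q b * (1 - q^(2*b+2)) * (1 - q^(2*b+4)) := by
        rw [(by omega : b+2 = (b+1)+1), P_succ, P_succ, (by omega : 2*(b+1)+2 = 2*b+4)]
      have eb1 : P q (b+1) = P q b * (1 - q^(2*b+2)) := P_succ b
      have hz1 : q ^ (2*((a:ℤ)+2)) = q^(2*a+4 : ℕ) := by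
        rw [show (2*((a:ℤ)+2)) = ((2*a+4 : ℕ) : ℤ) by push_cast; ring, zpow_natCast]
      have hz2 : q ^ (2*((b:ℤ)+2)) = q^(2*b+4 : ℕ) := by
        rw [show (2*((b:ℤ)+2)) = ((2*b+4 : ℕ) : ℤ) by push_cast; ring, zpow_natCast]
      have h42 : q^(4*n+2) = q^(2*a+2*b+6 : ℕ) := by rw [(by omega : 4*n+2 = 2*a+2*b+6)]
      rw [e1, ea2, ea1, eb2, eb1, hz1, hz2, h42]
      have hPa := hPne a; have hPb := hPne b; have hPn := hPne (2*n)
      have f1 := hfne (2*a+1); have f2 := hfne (2*a+3)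
      have f3 := hfne (2*b+1); have f4 := hfne (2*b+3)
      rw [(by omega : 2*a+1+1 = 2*a+2)] at f1
      rw [(by omega : 2*a+3+1 = 2*a+4)] at f2
      rw [(by omega : 2*b+1+1 = 2*b+2)] at f3
      rw [(by omega : 2*b+3+1 = 2*b+4)] at f4
      field_simp
      ring

noncomputable def f (q : ℝ) (n : ℕ) (k : ℤ) : ℝ := (-1:ℝ)^k * q ^ (((k:ℝ))^2) * B q n k

noncomputable def T (q : ℝ) (n : ℕ) : ℝ := ∑' k : ℤ, f q n k

lemma B_rec (hq0 : 0 < q) (hq1 : q < 1) (n : ℕ) (k : ℤ) :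
    B q (n+1) k = (1 + q^(4*n+2)) * B q n k
      + q ^ (2*((n:ℤ)+1-k)) * B q n (k-1) + q ^ (2*((n:ℤ)+1+k)) * B q n (k+1) := by
  have h := key hq0 hq1 n ((n:ℤ)+1-k) ((n:ℤ)+1+k) (by ring)
  unfold B
  have c1 : ((n+1:ℕ):ℤ) - k = (n:ℤ)+1-k := by push_cast; ring
  have c2 : ((n+1:ℕ):ℤ) + k = (n:ℤ)+1+k := by push_cast; ring
  have c3 : (n:ℤ)+1-k-1 = (n:ℤ)-k := by ring
  have c4 : (n:ℤ)+1+k-1 = (n:ℤ)+k := by ring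
  have c5 : (n:ℤ) - (k-1) = (n:ℤ)+1-k := by ring
  have c6 : (n:ℤ) + (k-1) = (n:ℤ)+1+k-2 := by ring
  have c7 : (n:ℤ) - (k+1) = (n:ℤ)+1-k-2 := by ring
  have c8 : (n:ℤ) + (k+1) = (n:ℤ)+1+k := by ring
  rw [c1, c2, c5, c6, c7, c8, (by omega : 2*(n+1) = 2*n+2)]
  rw [h, c3, c4]

lemma B_zero (hq0 : 0 < q) (hq1 : q < 1) {n : ℕ} {k : ℤ} (h : (n:ℤ) < |k|) : B q n k = 0 := by
  rcases le_or_gt 0 k with hk | hk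
  · rw [abs_of_nonneg hk] at h
    have : (n:ℤ) - k < 0 := by omega
    simp [B, R_neg this]
  · rw [abs_of_neg hk] at h
    have : (n:ℤ) + k < 0 := by omega
    simp [B, R_neg this]

lemma f_zero (hq0 : 0 < q) (hq1 : q < 1) {n : ℕ} {k : ℤ} (h : (n:ℤ) < |k|) : f q n k = 0 := by
  simp [f, B_zero hq0 hq1 h]

lemma summable_f (hq0 : 0 < q) (hq1 : q < 1) (n : ℕ) : Summable (f q n) := by
  refine summable_of_ne_finset_zero (s := Finset.Icc (-(n:ℤ)) n) fun k hk => ?_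
  rw [Finset.mem_Icc, not_and_or, not_le, not_le] at hk
  refine f_zero hq0 hq1 ?_
  rcases hk with hk | hk
  · rw [abs_of_nonpos (by omega)]; omega
  · rw [abs_of_nonneg (by omega)]; omega

lemma f_rec (hq0 : 0 < q) (hq1 : q < 1) (n : ℕ) (k : ℤ) :
    f q (n+1) k = (1 + q^(4*n+2)) * f q n k
      - q^(2*n+1) * f q n (k-1) - q^(2*n+1) * f q n (k+1) := by
  unfold f
  rw [B_rec hq0 hq1 n k]
  have hzrpow : ∀ m : ℤ, (q : ℝ) ^ m = q ^ ((m:ℝ)) := fun m => (Real.rpow_intCast q m).symm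
  have hnrpow : ∀ m : ℕ, (q : ℝ) ^ m = q ^ ((m:ℝ)) := fun m => (Real.rpow_natCast q m).symm
  have key2 : (-1:ℝ)^k * q ^ (((k:ℝ))^2) * (q ^ (2*((n:ℤ)+1-k)) * B q n (k-1))
      = -(q^(2*n+1) * ((-1:ℝ)^(k-1) * q ^ ((((k-1:ℤ)):ℝ)^2) * B q n (k-1))) := by
    have hsign : (-1:ℝ)^k = -(-1:ℝ)^(k-1) := by
      rw [show k = (k-1)+1 by ring, zpow_add₀ (by norm_num : (-1:ℝ) ≠ 0)]
      ring_nf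
    have hpow : q ^ (((k:ℝ))^2) * q ^ ((((2*((n:ℤ)+1-k)) : ℤ)):ℝ)
        = q ^ (((2*n+1:ℕ)):ℝ) * q ^ ((((k-1:ℤ)):ℝ)^2) := by
      rw [← Real.rpow_add hq0, ← Real.rpow_add hq0]
      congr 1
      push_cast; ring
    rw [hsign, hzrpow (2*((n:ℤ)+1-k)), hnrpow (2*n+1)]
    linear_combination (-((-1:ℝ)^(k-1)) * B q n (k-1)) * hpow
  have key3 : (-1:ℝ)^k * q ^ (((k:ℝ))^2) * (q ^ (2*((n:ℤ)+1+k)) * B q n (k+1))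
      = -(q^(2*n+1) * ((-1:ℝ)^(k+1) * q ^ ((((k+1:ℤ)):ℝ)^2) * B q n (k+1))) := by
    have hsign : (-1:ℝ)^k = -(-1:ℝ)^(k+1) := by
      rw [show (k+1) = k+1 by ring, zpow_add₀ (by norm_num : (-1:ℝ) ≠ 0) k 1]
      ring_nf
    have hpow : q ^ (((k:ℝ))^2) * q ^ ((((2*((n:ℤ)+1+k)) : ℤ)):ℝ)
        = q ^ (((2*n+1:ℕ)):ℝ) * q ^ ((((k+1:ℤ)):ℝ)^2) := by
      rw [← Real.rpow_add hq0, ← Real.rpow_add hq0]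
      congr 1
      push_cast; ring
    rw [hsign, hzrpow (2*((n:ℤ)+1+k)), hnrpow (2*n+1)]
    linear_combination (-((-1:ℝ)^(k+1)) * B q n (k+1)) * hpow
  have expand : (-1:ℝ)^k * q ^ (((k:ℝ))^2) *
      ((1 + q^(4*n+2)) * B q n k + q ^ (2*((n:ℤ)+1-k)) * B q n (k-1)
        + q ^ (2*((n:ℤ)+1+k)) * B q n (k+1))
      = (1 + q^(4*n+2)) * ((-1:ℝ)^k * q ^ (((k:ℝ))^2) * B q n k)
        + (-1:ℝ)^k * q ^ (((k:ℝ))^2) * (q ^ (2*((n:ℤ)+1-k)) * B q n (k-1))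
        + (-1:ℝ)^k * q ^ (((k:ℝ))^2) * (q ^ (2*((n:ℤ)+1+k)) * B q n (k+1)) := by ring
  rw [expand, key2, key3]
  push_cast
  ring

lemma T_rec (hq0 : 0 < q) (hq1 : q < 1) (n : ℕ) :
    T q (n+1) = (1 - q^(2*n+1))^2 * T q n := by
  have hs := summable_f hq0 hq1 n
  have hs1 : Summable (fun k : ℤ => f q n (k-1)) :=
    by exact hs.comp_injective (Equiv.subRight (1:ℤ)).injective
  have hs2 : Summable (fun k : ℤ => f q n (k+1)) :=
    by exact hs.comp_injective (Equiv.addRight (1:ℤ)).injective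
  have ts1 : ∑' k : ℤ, f q n (k-1) = T q n := by
    have := (Equiv.subRight (1:ℤ)).tsum_eq (f q n)
    exact this
  have ts2 : ∑' k : ℤ, f q n (k+1) = T q n := by
    have := (Equiv.addRight (1:ℤ)).tsum_eq (f q n)
    exact this
  have : T q (n+1) = ∑' k : ℤ, ((1 + q^(4*n+2)) * f q n k
      - q^(2*n+1) * f q n (k-1) - q^(2*n+1) * f q n (k+1)) := by
    unfold T
    exact tsum_congr fun k => f_rec hq0 hq1 n k
  rw [this, Summable.tsum_sub (((hs.mul_left _).sub (hs1.mul_left _))) (hs2.mul_left _),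
    Summable.tsum_sub (hs.mul_left _) (hs1.mul_left _), tsum_mul_left, tsum_mul_left, tsum_mul_left,
    ts1, ts2]
  unfold T
  ring

lemma T_zero (hq0 : 0 < q) (hq1 : q < 1) : T q 0 = 1 := by
  unfold T
  rw [tsum_eq_single 0 (fun k hk => f_zero hq0 hq1 (by simpa using hk))]
  simp [f, B, R, P]

lemma T_eq (hq0 : 0 < q) (hq1 : q < 1) (n : ℕ) :
    T q n = (∏ j ∈ Finset.range n, (1 - q^(2*j+1)))^2 := by
  induction n with
  | zero => simp [T_zero hq0 hq1]
  | succ n ih =>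
      rw [T_rec hq0 hq1 n, ih, Finset.prod_range_succ]
      ring

noncomputable def Pev (q : ℝ) : ℝ := ∏' n : ℕ, (1 - q^(2*n+2))
noncomputable def Podd (q : ℝ) : ℝ := ∏' n : ℕ, (1 - q^(2*n+1))

variable (hq0 : 0 < q) (hq1 : q < 1)
include hq0 hq1

lemma hasProd_ev : HasProd (fun n : ℕ => 1 - q^(2*n+2)) (Pev q) := by
  have h := hasProd_one_sub hq0 hq1 (fun n => q^(2*n+2)) (fun n => by positivity)
    (fun n => pow_le_pow_of_le_one hq0.le hq1.le (by omega))
  exact h.multipliable.hasProd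

lemma hasProd_odd : HasProd (fun n : ℕ => 1 - q^(2*n+1)) (Podd q) := by
  have h := hasProd_one_sub hq0 hq1 (fun n => q^(2*n+1)) (fun n => by positivity)
    (fun n => pow_le_pow_of_le_one hq0.le hq1.le (by omega))
  exact h.multipliable.hasProd

lemma Pev_pos : 0 < Pev q := by
  have h := hasProd_one_sub hq0 hq1 (fun n => q^(2*n+2)) (fun n => by positivity)
    (fun n => pow_le_pow_of_le_one hq0.le hq1.le (by omega))
  rw [show Pev q = ∏' n : ℕ, (1 - q^(2*n+2)) from rfl, h.tprod_eq]
  exact Real.exp_pos _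

lemma P_tendsto : Tendsto (P q) atTop (𝓝 (Pev q)) := (hasProd_ev hq0 hq1).tendsto_prod_nat

lemma P_antitone : Antitone (P q) := by
  refine antitone_nat_of_succ_le fun m => ?_
  rw [P_succ]
  have h1 := P_pos hq0 hq1 m
  have h2 : 0 < q ^ (2*m+2) := by positivity
  nlinarith

lemma Pev_le_P (m : ℕ) : Pev q ≤ P q m := by
  refine le_of_tendsto (P_tendsto hq0 hq1) ?_
  filter_upwards [eventually_ge_atTop m] with n hn
  exact P_antitone hq0 hq1 hn

lemma R_nonneg (m : ℤ) : 0 ≤ R q m := by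
  unfold R
  split
  · exact (inv_pos.mpr (P_pos hq0 hq1 _)).le
  · exact le_refl 0
lemma R_le (m : ℤ) : R q m ≤ (Pev q)⁻¹ := by
  unfold R
  split
  · exact inv_anti₀ (Pev_pos hq0 hq1) (Pev_le_P hq0 hq1 _)
  · exact (inv_pos.mpr (Pev_pos hq0 hq1)).le

lemma B_nonneg (n : ℕ) (k : ℤ) : 0 ≤ B q n k :=
  mul_nonneg (mul_nonneg (P_pos hq0 hq1 _).le (R_nonneg hq0 hq1 _)) (R_nonneg hq0 hq1 _)

lemma B_le (n : ℕ) (k : ℤ) : B q n k ≤ (Pev q)⁻¹ * (Pev q)⁻¹ := by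
  have h1 := P_le_one hq0 hq1 (2*n)
  have h2 := R_le hq0 hq1 ((n:ℤ) - k)
  have h3 := R_le hq0 hq1 ((n:ℤ) + k)
  have h4 := R_nonneg hq0 hq1 ((n:ℤ) - k)
  have h5 := R_nonneg hq0 hq1 ((n:ℤ) + k)
  have h6 := (P_pos hq0 hq1 (2*n)).le
  have h7 := (inv_pos.mpr (Pev_pos hq0 hq1)).le
  calc P q (2*n) * R q ((n:ℤ)-k) * R q ((n:ℤ)+k)
      ≤ 1 * (Pev q)⁻¹ * (Pev q)⁻¹ := by
        exact mul_le_mul (mul_le_mul h1 h2 h4 zero_le_one) h3 h5 (by positivity)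
    _ = (Pev q)⁻¹ * (Pev q)⁻¹ := by ring

lemma summable_rpow_sq : Summable (fun k : ℤ => q ^ (((k:ℝ))^2)) := by
  have hnat : Summable (fun n : ℕ => q ^ (((n:ℝ))^2)) := by
    refine Summable.of_norm_bounded (summable_geometric_of_lt_one hq0.le hq1) fun n => ?_
    rw [Real.norm_eq_abs, abs_of_nonneg (Real.rpow_nonneg hq0.le _)]
    calc q ^ (((n:ℝ))^2) ≤ q ^ ((n:ℝ)) := by
          refine Real.rpow_le_rpow_of_exponent_ge hq0 hq1.le ?_
          have : (n:ℝ) * 1 ≤ (n:ℝ) * (n:ℝ) := by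
            rcases Nat.eq_zero_or_pos n with h | h
            · simp [h]
            · exact mul_le_mul_of_nonneg_left (by exact_mod_cast h) (Nat.cast_nonneg n)
          nlinarith
      _ = q ^ n := Real.rpow_natCast q n
  refine Summable.of_nat_of_neg (hnat.congr fun n => by norm_num) (hnat.congr fun n => ?_)
  congr 1
  push_cast
  ring

lemma B_tendsto (k : ℤ) : Tendsto (fun n : ℕ => B q n k) atTop (𝓝 ((Pev q)⁻¹)) := by
  have hPev := Pev_pos hq0 hq1
  have t1 : Tendsto (fun n : ℕ => P q (2*n)) atTop (𝓝 (Pev q)) :=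
    (P_tendsto hq0 hq1).comp (tendsto_atTop_mono (fun n => Nat.le_mul_of_pos_left n two_pos) tendsto_id)
  have t2 : Tendsto (fun n : ℕ => P q ((n:ℤ) - k).toNat) atTop (𝓝 (Pev q)) := by
    refine (P_tendsto hq0 hq1).comp (tendsto_atTop_atTop.2 fun b => ⟨b + k.natAbs, fun n hn => ?_⟩)
    omega
  have t3 : Tendsto (fun n : ℕ => P q ((n:ℤ) + k).toNat) atTop (𝓝 (Pev q)) := by
    refine (P_tendsto hq0 hq1).comp (tendsto_atTop_atTop.2 fun b => ⟨b + k.natAbs, fun n hn => ?_⟩)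
    omega
  have tall : Tendsto (fun n : ℕ => P q (2*n) * (P q ((n:ℤ) - k).toNat)⁻¹ *
      (P q ((n:ℤ) + k).toNat)⁻¹) atTop (𝓝 (Pev q * (Pev q)⁻¹ * (Pev q)⁻¹)) :=
    (t1.mul (t2.inv₀ hPev.ne')).mul (t3.inv₀ hPev.ne')
  rw [mul_inv_cancel₀ hPev.ne', one_mul] at tall
  refine tall.congr' ?_
  filter_upwards [eventually_ge_atTop k.natAbs] with n hn
  unfold B R
  rw [if_pos (by omega), if_pos (by omega)]

lemma T_tendsto_theta : Tendsto (T q) atTop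
    (𝓝 ((∑' k : ℤ, (-1:ℝ)^k * q ^ (((k:ℝ))^2)) * (Pev q)⁻¹)) := by
  have h := tendsto_tsum_of_dominated_convergence
    (f := fun (n : ℕ) (k : ℤ) => f q n k)
    (g := fun k : ℤ => (-1:ℝ)^k * q ^ (((k:ℝ))^2) * (Pev q)⁻¹)
    (bound := fun k : ℤ => q ^ (((k:ℝ))^2) * ((Pev q)⁻¹ * (Pev q)⁻¹))
    ((summable_rpow_sq hq0 hq1).mul_right _)
    (fun k => by
      have := (B_tendsto hq0 hq1 k).const_mul ((-1:ℝ)^k * q ^ (((k:ℝ))^2))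
      refine this.congr fun n => ?_
      simp [f, mul_assoc])
    (by
      filter_upwards with n
      intro k
      have hB0 := B_nonneg hq0 hq1 n k
      have hBle := B_le hq0 hq1 n k
      have habs : |(-1:ℝ)^k| = 1 := by
        rcases Int.even_or_odd k with hk | hk
        · rw [hk.neg_one_zpow]; norm_num
        · rw [hk.neg_one_zpow]; norm_num
      rw [show f q n k = (-1:ℝ)^k * q ^ (((k:ℝ))^2) * B q n k from rfl, Real.norm_eq_abs,
        abs_mul, abs_mul, habs, one_mul, abs_of_nonneg (Real.rpow_nonneg hq0.le _),
        abs_of_nonneg hB0]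
      exact mul_le_mul_of_nonneg_left hBle (Real.rpow_nonneg hq0.le _))
  have heq : ∑' k : ℤ, ((-1:ℝ)^k * q ^ (((k:ℝ))^2) * (Pev q)⁻¹)
      = (∑' k : ℤ, (-1:ℝ)^k * q ^ (((k:ℝ))^2)) * (Pev q)⁻¹ := tsum_mul_right
  rw [heq] at h
  exact h

lemma T_tendsto_prod : Tendsto (T q) atTop (𝓝 ((Podd q)^2)) := by
  have h := ((hasProd_odd hq0 hq1).tendsto_prod_nat).pow 2
  refine h.congr fun n => ?_
  exact (T_eq hq0 hq1 n).symm

lemma main_id : (Podd q)^2 * Pev q = ∑' k : ℤ, (-1:ℝ)^k * q ^ (((k:ℝ))^2) := by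
  have h := tendsto_nhds_unique (T_tendsto_prod hq0 hq1) (T_tendsto_theta hq0 hq1)
  have hPev := Pev_pos hq0 hq1
  field_simp at h
  linarith [h]

lemma E_split : (∏' n : ℕ, (1 - q^(n+1))) = Podd q * Pev q := by
  have hodd : Multipliable (fun n : ℕ => 1 - q^(2*n+1)) := (hasProd_odd hq0 hq1).multipliable
  have hev : Multipliable (fun n : ℕ => 1 - q^(2*n+2)) := (hasProd_ev hq0 hq1).multipliable
  have h := tprod_even_mul_odd (f := fun n : ℕ => 1 - q^(n+1))
    (hodd.congr fun n => by ring_nf) (hev.congr fun n => by ring_nf)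
  rw [← h]
  congr 1 <;> exact tprod_congr fun n => by ring_nf

end Stmt1Aux

theorem stmt1 (q : ℝ) (hq0 : 0 < q) (hq1 : q < 1) :
    eta q ^ 2 / eta (q ^ 2) = theta4 q := by
  have hPev := Stmt1Aux.Pev_pos hq0 hq1
  have hE := Stmt1Aux.E_split hq0 hq1
  have hmain := Stmt1Aux.main_id hq0 hq1
  have h2prod : (∏' n : ℕ, (1 - (q^2)^(n+1))) = Stmt1Aux.Pev q := by
    refine tprod_congr fun n => ?_
    rw [← pow_mul, (by omega : 2*(n+1) = 2*n+2)]
  have hr1 : (q ^ ((1:ℝ)/24))^2 = q ^ ((1:ℝ)/12) := by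
    rw [← Real.rpow_natCast (q ^ ((1:ℝ)/24)) 2, ← Real.rpow_mul hq0.le]
    norm_num
  have hr2 : (q^2 : ℝ) ^ ((1:ℝ)/24) = q ^ ((1:ℝ)/12) := by
    rw [← Real.rpow_natCast q 2, ← Real.rpow_mul hq0.le]
    norm_num
  have hq112 : q ^ ((1:ℝ)/12) ≠ 0 := (Real.rpow_pos_of_pos hq0 _).ne'
  unfold eta theta4
  rw [mul_pow, hr1, hr2, h2prod, hE, ← hmain]
  field_simp
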